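/- Commit invariant of the transaction-commit model: if δInit →TC* δ and there exists a resource manager r with δ r = Committed, then for every resource manager r', δ r' = Prepared or δ r' = Committed. -/
import Mathlib


/-- The four states of a resource manager in the transaction-commit model. -/
inductive RMState where
  | working
  | prepared
  | committed
  | aborted
deriving DecidableEq

/-- Every resource manager is prepared or committed. -/
def CanCommit {RMs : Type} (δ : RMs → RMState) : Prop :=
  ∀ r', δ r' = RMState.prepared ∨ δ r' = RMState.committed

/-- No resource manager is committed. -/
def NotCommitted {RMs : Type} (δ : RMs → RMState) : Prop :=
  ∀ r', δ r' ≠ RMState.committed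

/-- The transition relation of the transaction-commit model. -/
inductive TCStep {RMs : Type} [DecidableEq RMs] :
    (RMs → RMState) → (RMs → RMState) → Prop where
  | prepare (δ : RMs → RMState) (r : RMs) (h : δ r = RMState.working) :
      TCStep δ (Function.update δ r RMState.prepared)
  | commit (δ : RMs → RMState) (r : RMs) (h : δ r = RMState.prepared)
      (hc : CanCommit δ) :
      TCStep δ (Function.update δ r RMState.committed)
  | abort (δ : RMs → RMState) (r : RMs)
      (h : δ r = RMState.working ∨ δ r = RMState.prepared)
      (hn : NotCommitted δ) :
      TCStep δ (Function.update δ r RMState.aborted)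

/-- Commit invariant of the transaction-commit model: in any reachable state in which some
resource manager is committed, every resource manager is prepared or committed. -/
theorem tc_commit_invariant {RMs : Type} [DecidableEq RMs] (δ : RMs → RMState)
    (hreach : Relation.ReflTransGen TCStep (fun _ => RMState.working) δ)
    (hcommit : ∃ r, δ r = RMState.committed) :
    ∀ r' : RMs, δ r' = RMState.prepared ∨ δ r' = RMState.committed := by
  suffices h : (∃ r, δ r = RMState.committed) →
      ∀ r' : RMs, δ r' = RMState.prepared ∨ δ r' = RMState.committed from h hcommit
  clear hcommit
  induction hreach with
  | refl => rintro ⟨r, hr⟩; simp at hr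
  | tail _ hstep ih =>
    cases hstep with
    | prepare r h =>
      rintro ⟨r0, hr0⟩ r'
      rcases eq_or_ne r0 r with rfl | hne
      · simp [Function.update] at hr0
      · rw [Function.update_of_ne hne] at hr0
        have := ih ⟨r0, hr0⟩ r
        rw [h] at this
        rcases this with h' | h' <;> simp at h'
    | commit r h hc =>
      intro _ r'
      rcases eq_or_ne r' r with rfl | hne
      · simp [Function.update]
      · rw [Function.update_of_ne hne]; exact hc r'
    | abort r h hn =>
      rintro ⟨r0, hr0⟩ r'
      rcases eq_or_ne r0 r with rfl | hne
      · simp [Function.update] at hr0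
      · rw [Function.update_of_ne hne] at hr0
        exact absurd hr0 (hn r0)
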